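/- The coordinate-wise reflection map x ↦ x̄ from (-L-R, L+R)^d \ (-L,L)^d into [-L,L]^d \ [-L+R, L-R]^d, defined by (x̄)_j = -2L - x_j if x_j < -L, x_j if |x_j| ≤ L, and 2L - x_j if x_j > L, is measure-preserving on each of the 3^d - 1 congruent pieces, and each point of its range has at most 2^d - 1 preimages; consequently for any nonnegative measurable g on [-L,L]^d, ∫_{(-L-R,L+R)^d \ (-L,L)^d} g(x̄) dx ≤ (2^d - 1) ∫_{(-L,L)^d} g(x) dx. -/

import Mathlib

open MeasureTheory Real Set
open scoped ENNReal

noncomputable section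

abbrev Euc (d : ℕ) := EuclideanSpace ℝ (Fin d)

/-- Membership in the Sobolev space `W₂¹(U)` (with a differentiable representative). -/
def MemH1 {d : ℕ} (U : Set (Euc d)) (f : Euc d → ℝ) : Prop :=
  DifferentiableOn ℝ f U ∧ IntegrableOn (fun x => (f x) ^ 2) U volume ∧
    IntegrableOn (fun x => ‖fderiv ℝ f x‖ ^ 2) U volume

/-- Square of the `W₂¹(U)` norm. -/
def H1normSq {d : ℕ} (U : Set (Euc d)) (f : Euc d → ℝ) : ℝ :=
  (∫ x in U, (f x) ^ 2) + ∫ x in U, ‖fderiv ℝ f x‖ ^ 2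

/-- Glazman-type counting function for the Neumann Laplacian on `U`:
the supremum of dimensions of subspaces of `W₂¹(U)` on which the Rayleigh quotient
is `< lam`. -/
def NeumannCount {d : ℕ} (U : Set (Euc d)) (lam : ℝ) : ℝ≥0∞ :=
  ⨆ V : {V : Submodule ℝ (Euc d → ℝ) // FiniteDimensional ℝ V ∧
      (∀ f ∈ V, MemH1 U f) ∧
      ∀ f ∈ V, f ≠ 0 → (0 < ∫ x in U, (f x) ^ 2) ∧
        (∫ x in U, ‖fderiv ℝ f x‖ ^ 2) < lam * ∫ x in U, (f x) ^ 2},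
    (Module.finrank ℝ V.1 : ℝ≥0∞)

/-- The open cube `(-L, L)^d`. -/
def openCube (d : ℕ) (L : ℝ) : Set (Euc d) := {x | ∀ i, -L < x i ∧ x i < L}

/-- Volume of the unit ball in `ℝ^d`. -/
def ballVol (d : ℕ) : ℝ := (volume (Metric.ball (0 : Euc d) 1)).toReal

/-- Coordinate-wise reflection across the faces of the cube `(-L,L)^d`. -/
def cubeReflect {d : ℕ} (L : ℝ) (x : Euc d) : Euc d :=
  WithLp.toLp 2 (fun i => if x i < -L then -2 * L - x i else if x i ≤ L then x i else 2 * L - x i)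

namespace ReflAux

def Dint (L R : ℝ) (v : Fin 3) : Set ℝ :=
  if v = 0 then Set.Ioo (-(L+R)) (-L) else if v = 1 then Set.Ioo (-L) L else Set.Ioo L (L+R)

def Eint (L R : ℝ) (v : Fin 3) : Set ℝ :=
  if v = 0 then Set.Ioo (-L) (-L+R) else if v = 1 then Set.Ioo (-L) L else Set.Ioo (L-R) L

def aff (L : ℝ) (v : Fin 3) (t : ℝ) : ℝ :=
  if v = 0 then -2*L - t else if v = 1 then t else 2*L - t

def rfl1 (L t : ℝ) : ℝ := if t < -L then -2 * L - t else if t ≤ L then t else 2 * L - t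

variable {L R : ℝ}

lemma measurableSet_Dint (v : Fin 3) : MeasurableSet (Dint L R v) := by
  unfold Dint; split_ifs <;> exact measurableSet_Ioo

lemma measurableSet_Eint (v : Fin 3) : MeasurableSet (Eint L R v) := by
  unfold Eint; split_ifs <;> exact measurableSet_Ioo

lemma aff_measurePreserving (L : ℝ) (v : Fin 3) :
    MeasurePreserving (aff L v) volume volume := by
  fin_cases v
  · exact Measure.measurePreserving_sub_left (volume : Measure ℝ) (-2*L)
  · exact MeasurePreserving.id (volume : Measure ℝ)
  · exact Measure.measurePreserving_sub_left (volume : Measure ℝ) (2*L)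

lemma mem_Dint_iff (v : Fin 3) {t : ℝ} : t ∈ Dint L R v ↔ aff L v t ∈ Eint L R v := by
  fin_cases v <;> simp [Dint, Eint, aff, Set.mem_Ioo] <;>
    constructor <;> (rintro ⟨h1, h2⟩; constructor <;> linarith)

lemma rfl1_eq_aff (v : Fin 3) {t : ℝ} (h : t ∈ Dint L R v) (hR : 0 < R) (hRL : R < L) :
    rfl1 L t = aff L v t := by
  have hL : 0 < L := hR.trans hRL
  fin_cases v
  · obtain ⟨h1, h2⟩ : -(L+R) < t ∧ t < -L := h
    show (if t < -L then -2 * L - t else if t ≤ L then t else 2 * L - t) = -2*L - t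
    rw [if_pos h2]
  · obtain ⟨h1, h2⟩ : -L < t ∧ t < L := h
    show (if t < -L then -2 * L - t else if t ≤ L then t else 2 * L - t) = t
    rw [if_neg (by linarith), if_pos (by linarith)]
  · obtain ⟨h1, h2⟩ : L < t ∧ t < L + R := h
    show (if t < -L then -2 * L - t else if t ≤ L then t else 2 * L - t) = 2*L - t
    rw [if_neg (by linarith), if_neg (by linarith)]

lemma Dint_disjoint (hR : 0 < R) (hRL : R < L) {v w : Fin 3} (hvw : v ≠ w) :
    Disjoint (Dint L R v) (Dint L R w) := by
  rw [Set.disjoint_left]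
  intro t hv hw
  fin_cases v <;> fin_cases w <;> simp_all [Dint, Set.mem_Ioo] <;> linarith

lemma Eint_subset (hR : 0 < R) (hRL : R < L) (v : Fin 3) : Eint L R v ⊆ Set.Ioo (-L) L := by
  intro t ht
  fin_cases v
  · obtain ⟨h1, h2⟩ : -L < t ∧ t < -L + R := ht
    exact ⟨h1, by linarith⟩
  · exact ht
  · obtain ⟨h1, h2⟩ : L - R < t ∧ t < L := ht
    exact ⟨by linarith, h2⟩

lemma Eint_not_both (hRL : R < L) {t : ℝ} (h0 : t ∈ Eint L R 0) (h2 : t ∈ Eint L R 2) :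
    False := by
  simp [Eint, Set.mem_Ioo] at h0 h2; linarith


variable {d : ℕ}

def piece (L R : ℝ) (d : ℕ) (s : Fin d → Fin 3) : Set (Fin d → ℝ) :=
  Set.univ.pi fun i => Dint L R (s i)

def Bset (L R : ℝ) (d : ℕ) (s : Fin d → Fin 3) : Set (Fin d → ℝ) :=
  Set.univ.pi fun i => Eint L R (s i)

def Ts (L : ℝ) (d : ℕ) (s : Fin d → Fin 3) (f : Fin d → ℝ) : Fin d → ℝ :=
  fun i => aff L (s i) (f i)

lemma Ts_measurePreserving (L : ℝ) (d : ℕ) (s : Fin d → Fin 3) :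
    MeasurePreserving (Ts L d s) volume volume :=
  volume_preserving_pi fun i => aff_measurePreserving L (s i)

lemma Ts_preimage (L R : ℝ) (d : ℕ) (s : Fin d → Fin 3) :
    Ts L d s ⁻¹' Bset L R d s = piece L R d s := by
  ext f
  simp only [Bset, piece, Set.mem_preimage, Set.mem_pi, Set.mem_univ, true_implies, Ts]
  exact forall_congr' fun i => (mem_Dint_iff (s i)).symm

lemma slice_null (d : ℕ) (i : Fin d) (c : ℝ) : volume {f : Fin d → ℝ | f i = c} = 0 := by
  have h : {f : Fin d → ℝ | f i = c}
      = Set.univ.pi (fun j => if j = i then ({c} : Set ℝ) else Set.univ) := by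
    ext f
    simp only [Set.mem_setOf_eq, Set.mem_pi, Set.mem_univ, true_implies]
    constructor
    · intro h j
      by_cases hj : j = i
      · subst hj; simp [h]
      · simp [hj]
    · intro h
      have := h i
      simpa using this
  rw [h, volume_pi_pi]
  refine Finset.prod_eq_zero (Finset.mem_univ i) ?_
  simp


/-- Pointwise counting bound. -/
lemma indicator_sum_bound (L R : ℝ) (hR : 0 < R) (hRL : R < L) (d : ℕ)
    (G : (Fin d → ℝ) → ℝ≥0∞) (f : Fin d → ℝ) :
    ∑ s ∈ Finset.univ.erase (fun _ : Fin d => (1 : Fin 3)), (Bset L R d s).indicator G f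
      ≤ ((2:ℝ≥0∞)^d - 1) * (Set.univ.pi fun _ : Fin d => Set.Ioo (-L) L).indicator G f := by
  classical
  set Q : Set (Fin d → ℝ) := Set.univ.pi fun _ => Set.Ioo (-L) L with hQdef
  set F : Finset (Fin d → Fin 3) := Finset.univ.erase (fun _ => 1) with hFdef
  by_cases hfQ : f ∈ Q
  · set A : Fin d → Finset (Fin 3) := fun i => Finset.univ.filter (fun v => f i ∈ Eint L R v)
      with hA
    have h1A : ∀ i, (1 : Fin 3) ∈ A i := by
      intro i
      refine Finset.mem_filter.mpr ⟨Finset.mem_univ _, ?_⟩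
      exact hfQ i (Set.mem_univ i)
    have hcardA : ∀ i, (A i).card ≤ 2 := by
      intro i
      have hne : A i ≠ Finset.univ := by
        intro h
        have h0 : (0 : Fin 3) ∈ A i := h ▸ Finset.mem_univ _
        have h2 : (2 : Fin 3) ∈ A i := h ▸ Finset.mem_univ _
        exact Eint_not_both hRL (Finset.mem_filter.mp h0).2 (Finset.mem_filter.mp h2).2
      have h3 := (Finset.card_lt_iff_ne_univ (A i)).mpr hne
      simpa using Nat.lt_succ_iff.mp (by simpa using h3)
    have hsub : F.filter (fun s => f ∈ Bset L R d s)
        ⊆ (Fintype.piFinset A).erase (fun _ => 1) := by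
      intro s hs
      obtain ⟨hsF, hfB⟩ := Finset.mem_filter.mp hs
      refine Finset.mem_erase.mpr ⟨(Finset.mem_erase.mp hsF).1, ?_⟩
      exact Fintype.mem_piFinset.mpr fun i =>
        Finset.mem_filter.mpr ⟨Finset.mem_univ _, hfB i (Set.mem_univ i)⟩
    have hmem1 : (fun _ => (1:Fin 3)) ∈ Fintype.piFinset A := Fintype.mem_piFinset.mpr h1A
    have hcard : (F.filter (fun s => f ∈ Bset L R d s)).card ≤ 2^d - 1 := by
      calc (F.filter (fun s => f ∈ Bset L R d s)).card
          ≤ ((Fintype.piFinset A).erase (fun _ => 1)).card := Finset.card_le_card hsub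
        _ = (Fintype.piFinset A).card - 1 := Finset.card_erase_of_mem hmem1
        _ ≤ 2^d - 1 := by
            have hle : (Fintype.piFinset A).card ≤ 2^d := by
              rw [Fintype.card_piFinset]
              calc ∏ i, (A i).card ≤ ∏ _i : Fin d, 2 :=
                    Finset.prod_le_prod' (fun i _ => hcardA i)
                _ = 2^d := by simp
            omega
    have hcast : ((2^d - 1 : ℕ) : ℝ≥0∞) = (2:ℝ≥0∞)^d - 1 := by
      rw [ENNReal.natCast_sub, Nat.cast_pow, Nat.cast_one, Nat.cast_ofNat]
    calc ∑ s ∈ F, (Bset L R d s).indicator G f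
        = ∑ s ∈ F, if f ∈ Bset L R d s then G f else 0 :=
          Finset.sum_congr rfl fun s _ => Set.indicator_apply _ _ _
      _ = ∑ _s ∈ F.filter (fun s => f ∈ Bset L R d s), G f := (Finset.sum_filter _ _).symm
      _ = (F.filter (fun s => f ∈ Bset L R d s)).card • G f := Finset.sum_const _
      _ = ((F.filter (fun s => f ∈ Bset L R d s)).card : ℝ≥0∞) * G f := nsmul_eq_mul _ _
      _ ≤ ((2:ℝ≥0∞)^d - 1) * G f := by
          refine mul_le_mul_left ?_ _
          refine le_trans (Nat.cast_le.mpr hcard) ?_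
          rw [hcast]
      _ = ((2:ℝ≥0∞)^d - 1) * Q.indicator G f := by rw [Set.indicator_of_mem hfQ]
  · have hzero : ∀ s ∈ F, (Bset L R d s).indicator G f = 0 := by
      intro s _
      refine Set.indicator_of_notMem (fun hfB => hfQ ?_) _
      intro i _
      exact Eint_subset hR hRL (s i) (hfB i (Set.mem_univ i))
    rw [Finset.sum_congr rfl hzero]
    simp

lemma pi_bound (d : ℕ) (L R : ℝ) (hR : 0 < R) (hRL : R < L)
    (G : (Fin d → ℝ) → ℝ≥0∞) (hG : Measurable G) :
    ∫⁻ f in (Set.univ.pi fun _ : Fin d => Set.Ioo (-(L+R)) (L+R)) \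
        (Set.univ.pi fun _ : Fin d => Set.Ioo (-L) L), G (fun i => rfl1 L (f i))
      ≤ ((2:ℝ≥0∞)^d - 1) * ∫⁻ f in (Set.univ.pi fun _ : Fin d => Set.Ioo (-L) L), G f := by
  classical
  set Q : Set (Fin d → ℝ) := Set.univ.pi fun _ => Set.Ioo (-L) L with hQdef
  set QR : Set (Fin d → ℝ) := Set.univ.pi fun _ => Set.Ioo (-(L+R)) (L+R) with hQRdef
  set N : Set (Fin d → ℝ) := ⋃ i, ({f | f i = -L} ∪ {f | f i = L}) with hNdef
  have hNnull : volume N = 0 := by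
    rw [hNdef]
    exact measure_iUnion_null fun i =>
      measure_union_null (slice_null d i _) (slice_null d i _)
  have hmQ : MeasurableSet Q := MeasurableSet.univ_pi fun _ => measurableSet_Ioo
  have hmpiece : ∀ s : Fin d → Fin 3, MeasurableSet (piece L R d s) := fun s =>
    MeasurableSet.univ_pi fun i => measurableSet_Dint _
  have hmB : ∀ s : Fin d → Fin 3, MeasurableSet (Bset L R d s) := fun s =>
    MeasurableSet.univ_pi fun i => measurableSet_Eint _
  set F : Finset (Fin d → Fin 3) := Finset.univ.erase (fun _ => 1) with hFdef
  have hcover : (QR \ Q) \ N ⊆ ⋃ s ∈ F, piece L R d s := by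
    rintro f ⟨⟨hfQR, hfQ⟩, hfN⟩
    have hfN' : ∀ i, f i ≠ -L ∧ f i ≠ L := by
      intro i
      constructor <;> intro h <;> exact hfN (Set.mem_iUnion.mpr ⟨i, by simp [h]⟩)
    set s : Fin d → Fin 3 := fun i => if f i < -L then 0 else if f i < L then 1 else 2
      with hsdef
    have hfpiece : f ∈ piece L R d s := by
      intro i _
      have h1 := hfQR i (Set.mem_univ i)
      obtain ⟨h1a, h1b⟩ : -(L+R) < f i ∧ f i < L + R := h1
      rcases lt_trichotomy (f i) (-L) with hlt | heq | hgt
      · have hs : s i = 0 := by simp only [hsdef]; rw [if_pos hlt]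
        show f i ∈ Dint L R (s i)
        rw [hs]
        exact (⟨h1a, hlt⟩ : f i ∈ Set.Ioo (-(L+R)) (-L))
      · exact absurd heq (hfN' i).1
      · by_cases hlt2 : f i < L
        · have hs : s i = 1 := by
            simp only [hsdef]; rw [if_neg (by linarith), if_pos hlt2]
          show f i ∈ Dint L R (s i)
          rw [hs]
          exact (⟨hgt, hlt2⟩ : f i ∈ Set.Ioo (-L) L)
        · have hgt2 : L < f i := lt_of_le_of_ne (not_lt.mp hlt2) (Ne.symm (hfN' i).2)
          have hs : s i = 2 := by
            simp only [hsdef]; rw [if_neg (by linarith), if_neg hlt2]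
          show f i ∈ Dint L R (s i)
          rw [hs]
          exact (⟨hgt2, h1b⟩ : f i ∈ Set.Ioo L (L+R))
    have hsF : s ∈ F := by
      rw [hFdef, Finset.mem_erase]
      refine ⟨?_, Finset.mem_univ _⟩
      intro hcon
      apply hfQ
      intro i _
      have hi := congrFun hcon i
      simp only [hsdef] at hi
      by_cases hlt : f i < -L
      · rw [if_pos hlt] at hi; exact absurd hi (by decide)
      · by_cases hlt2 : f i < L
        · have h0 : -L < f i := lt_of_le_of_ne (not_lt.mp hlt) (Ne.symm (hfN' i).1)
          exact (⟨h0, hlt2⟩ : f i ∈ Set.Ioo (-L) L)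
        · rw [if_neg hlt, if_neg hlt2] at hi; exact absurd hi (by decide)
    exact Set.mem_biUnion hsF hfpiece
  have hdisj : (↑F : Set (Fin d → Fin 3)).PairwiseDisjoint (piece L R d) := by
    intro s hs t ht hst
    rw [Function.onFun, Set.disjoint_left]
    intro f hfs hft
    obtain ⟨i, hi⟩ := Function.ne_iff.mp hst
    exact Set.disjoint_left.mp (Dint_disjoint hR hRL hi)
      (hfs i (Set.mem_univ i)) (hft i (Set.mem_univ i))
  calc ∫⁻ f in QR \ Q, G (fun i => rfl1 L (f i))
      = ∫⁻ f in (QR \ Q) \ N, G (fun i => rfl1 L (f i)) := by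
        refine (setLIntegral_congr ?_).symm
        exact diff_ae_eq_self.mpr (measure_mono_null Set.inter_subset_right hNnull)
    _ ≤ ∫⁻ f in ⋃ s ∈ F, piece L R d s, G (fun i => rfl1 L (f i)) :=
        lintegral_mono_set hcover
    _ = ∑ s ∈ F, ∫⁻ f in piece L R d s, G (fun i => rfl1 L (f i)) :=
        lintegral_biUnion_finset hdisj (fun s _ => hmpiece s) _
    _ = ∑ s ∈ F, ∫⁻ f in Bset L R d s, G f := by
        refine Finset.sum_congr rfl fun s _ => ?_
        have h1 : ∫⁻ f in piece L R d s, G (fun i => rfl1 L (f i)) =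
            ∫⁻ f in piece L R d s, G (Ts L d s f) := by
          refine setLIntegral_congr_fun (hmpiece s) ?_
          refine fun f hf => ?_
          beta_reduce
          congr 1
          funext i
          exact rfl1_eq_aff (s i) (hf i (Set.mem_univ i)) hR hRL
        rw [h1, ← Ts_preimage L R d s]
        exact (Ts_measurePreserving L d s).setLIntegral_comp_preimage (hmB s) hG
    _ ≤ ((2:ℝ≥0∞)^d - 1) * ∫⁻ f in Q, G f := by
        calc ∑ s ∈ F, ∫⁻ f in Bset L R d s, G f
            = ∑ s ∈ F, ∫⁻ f, (Bset L R d s).indicator G f := by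
              exact Finset.sum_congr rfl fun s _ => (lintegral_indicator (hmB s) G).symm
          _ = ∫⁻ f, ∑ s ∈ F, (Bset L R d s).indicator G f :=
              (lintegral_finset_sum _ fun s _ => hG.indicator (hmB s)).symm
          _ ≤ ∫⁻ f, ((2:ℝ≥0∞)^d - 1) * Q.indicator G f :=
              lintegral_mono fun f => indicator_sum_bound L R hR hRL d G f
          _ = ((2:ℝ≥0∞)^d - 1) * ∫⁻ f in Q, G f := by
              rw [lintegral_const_mul _ (hG.indicator hmQ), lintegral_indicator hmQ]


end ReflAux

lemma ReflAux.ncard_fiber (d : ℕ) (L R : ℝ) (hR : 0 < R) (hRL : R < L) (y : Euc d) :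
    ({x : Euc d | x ∈ openCube d (L + R) \ openCube d L ∧ cubeReflect L x = y}).ncard
      ≤ 2 ^ d - 1 := by
  classical
  have hL : 0 < L := hR.trans hRL
  set Fib := {x : Euc d | x ∈ openCube d (L + R) \ openCube d L ∧ cubeReflect L x = y}
    with hFib
  have hcoord : ∀ x ∈ Fib, ∀ i, (-(L+R) < x i ∧ x i < L + R) ∧
      (if x i < -L then -2 * L - x i else if x i ≤ L then x i else 2 * L - x i) = y i := by
    rintro x ⟨⟨hx1, _⟩, hx3⟩ i
    refine ⟨hx1 i, ?_⟩
    have : cubeReflect L x i = y i := by rw [hx3]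
    exact this
  set bp : Euc d → (Fin d → Bool) := fun x i => decide (x i < -L ∨ L < x i) with hbp
  have hinj : Set.InjOn bp Fib := by
    intro x hx x' hx' hbpeq
    ext i
    have hbi : (x i < -L ∨ L < x i) ↔ (x' i < -L ∨ L < x' i) := by
      have h := congrFun hbpeq i
      simp only [hbp, decide_eq_decide] at h
      exact h
    obtain ⟨⟨ha1, ha2⟩, hr⟩ := hcoord x hx i
    obtain ⟨⟨hb1, hb2⟩, hr'⟩ := hcoord x' hx' i
    rw [← hr'] at hr
    split_ifs at hr with h1 h2 h3 h4 h5 h6 h7 h8 h9 <;>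
      first
        | linarith
        | (rcases hbi.mp (by first | exact Or.inl ‹_› | exact Or.inr (by linarith)) with
            h | h <;> linarith)
        | (rcases hbi.mpr (by first | exact Or.inl ‹_› | exact Or.inr (by linarith)) with
            h | h <;> linarith)
  have hmiss : ∃ p : Fin d → Bool, ∀ x ∈ Fib, bp x ≠ p := by
    by_cases h1 : ∀ i, -L < y i ∧ y i < L
    · refine ⟨fun _ => false, fun x hx hcon => ?_⟩
      obtain ⟨⟨hx1, hx2⟩, hx3⟩ := hx
      apply hx2
      intro i
      have hbi : ¬(x i < -L ∨ L < x i) := by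
        have h := congrFun hcon i
        simpa [hbp] using h
      push_neg at hbi
      obtain ⟨hbi1, hbi2⟩ := hbi
      have hio := (hcoord x ⟨⟨hx1, hx2⟩, hx3⟩ i).2
      rw [if_neg (not_lt.mpr hbi1), if_pos hbi2] at hio
      rw [hio]
      exact h1 i
    · obtain ⟨i, hi⟩ := not_forall.mp h1
      refine ⟨Function.update (fun _ => false) i true, fun x hx hcon => ?_⟩
      have hbi : bp x i = true := by rw [hcon]; simp [Function.update]
      rw [hbp] at hbi
      simp only [decide_eq_true_eq] at hbi
      obtain ⟨⟨ha1, ha2⟩, hr⟩ := hcoord x hx i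
      rcases hbi with hlt | hgt
      · rw [if_pos hlt] at hr
        exact hi ⟨by linarith, by linarith⟩
      · rw [if_neg (not_lt.mpr (by linarith)), if_neg (not_le.mpr hgt)] at hr
        exact hi ⟨by linarith, by linarith⟩
  obtain ⟨p, hp⟩ := hmiss
  have hle := Set.ncard_le_ncard_of_injOn bp (fun x hx => hp x hx :
    ∀ x ∈ Fib, bp x ∈ {q : Fin d → Bool | q ≠ p}) hinj (Set.toFinite {q : Fin d → Bool | q ≠ p})
  refine hle.trans ?_
  have hset : {q : Fin d → Bool | q ≠ p} = Set.univ \ {p} := by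
    ext q; simp
  rw [hset, Set.ncard_diff_singleton_of_mem (Set.mem_univ p), Set.ncard_univ,
    Nat.card_eq_fintype_card, Fintype.card_fun]
  simp

theorem reflection_preimages_and_integral_bound {d : ℕ} (L R : ℝ) (hR : 0 < R) (hRL : R < L)
    (g : Euc d → ℝ≥0∞) (hg : Measurable g) :
    (∀ y : Euc d,
      ({x : Euc d | x ∈ openCube d (L + R) \ openCube d L ∧ cubeReflect L x = y}).ncard
        ≤ 2 ^ d - 1) ∧
    ∫⁻ x in openCube d (L + R) \ openCube d L, g (cubeReflect L x)
      ≤ ((2 : ℝ≥0∞) ^ d - 1) * ∫⁻ x in openCube d L, g x := by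
  constructor
  · exact fun y => ReflAux.ncard_fiber d L R hR hRL y
  · have hφ : MeasurePreserving ((MeasurableEquiv.toLp 2 (Fin d → ℝ)))
        (volume : Measure (Fin d → ℝ)) (volume : Measure (Euc d)) :=
      (EuclideanSpace.volume_preserving_symm_measurableEquiv_toLp (Fin d)).symm
    have hemb : MeasurableEmbedding ((MeasurableEquiv.toLp 2 (Fin d → ℝ))) :=
      (MeasurableEquiv.toLp 2 (Fin d → ℝ)).measurableEmbedding
    set φ : (Fin d → ℝ) → Euc d := ⇑(MeasurableEquiv.toLp 2 (Fin d → ℝ)) with hφdef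
    have key := ReflAux.pi_bound d L R hR hRL (fun q => g (φ q)) (hg.comp hemb.measurable)
    have hpre : ∀ c : ℝ, φ ⁻¹' (openCube d c) = Set.univ.pi fun _ : Fin d => Set.Ioo (-c) c := by
      intro c; ext p
      simp only [Set.mem_preimage, openCube, Set.mem_setOf_eq, Set.mem_pi, Set.mem_univ,
        true_implies, Set.mem_Ioo]
      exact Iff.rfl
    calc ∫⁻ x in openCube d (L + R) \ openCube d L, g (cubeReflect L x)
        = ∫⁻ p in φ ⁻¹' (openCube d (L + R) \ openCube d L), g (cubeReflect L (φ p)) :=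
          (hφ.setLIntegral_comp_preimage_emb hemb _ _).symm
      _ = ∫⁻ p in (Set.univ.pi fun _ : Fin d => Set.Ioo (-(L+R)) (L+R)) \
            (Set.univ.pi fun _ : Fin d => Set.Ioo (-L) L),
            (fun q => g (φ q)) (fun i => ReflAux.rfl1 L (p i)) := by
          rw [Set.preimage_diff, hpre (L+R), hpre L]
          rfl
      _ ≤ ((2:ℝ≥0∞)^d - 1) * ∫⁻ p in (Set.univ.pi fun _ : Fin d => Set.Ioo (-L) L),
            (fun q => g (φ q)) p := key
      _ = ((2 : ℝ≥0∞) ^ d - 1) * ∫⁻ x in openCube d L, g x := by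
          rw [← hpre L, hφ.setLIntegral_comp_preimage_emb hemb g _]
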